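/- For N > 0 and D_m > 0, the function f(x) = (D_m + x)·e^(2N/(D_m+x)) − D_m·e^(N/D_m) − x·e^(N/x) is monotonically non-decreasing on (0, D_m). -/

import Mathlib

lemma aux_antitone : AntitoneOn (fun t : ℝ => (1 - t) * Real.exp t) (Set.Ici 0) := by
  have hd : ∀ t : ℝ, HasDerivAt (fun t : ℝ => (1 - t) * Real.exp t)
      (-t * Real.exp t) t := by
    intro t
    have h := ((hasDerivAt_const t (1:ℝ)).sub (hasDerivAt_id t)).mul (Real.hasDerivAt_exp t)
    convert h using 1
    · rfl
    · rfl
    · rfl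
    simp [id]
    ring
  apply antitoneOn_of_deriv_nonpos (convex_Ici 0)
  · exact ((continuous_const.sub continuous_id).mul Real.continuous_exp).continuousOn
  · exact fun t _ => (hd t).differentiableAt.differentiableWithinAt
  · intro t ht
    rw [interior_Ici] at ht
    rw [(hd t).deriv]
    have : 0 ≤ t * Real.exp t := mul_nonneg (le_of_lt ht) (Real.exp_pos t).le
    linarith

theorem stmt_2 (N Dm : ℝ) (hN : 0 < N) (hD : 0 < Dm) :
    MonotoneOn (fun x : ℝ =>
      (Dm + x) * Real.exp (2 * N / (Dm + x)) - Dm * Real.exp (N / Dm) - x * Real.exp (N / x))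
      (Set.Ioo 0 Dm) := by
  have hderiv : ∀ x ∈ Set.Ioo (0:ℝ) Dm, HasDerivAt (fun x : ℝ =>
      (Dm + x) * Real.exp (2 * N / (Dm + x)) - Dm * Real.exp (N / Dm) - x * Real.exp (N / x))
      ((1 - 2 * N / (Dm + x)) * Real.exp (2 * N / (Dm + x))
        - (1 - N / x) * Real.exp (N / x)) x := by
    intro x hx
    obtain ⟨hx0, hxD⟩ := hx
    have hs : (0:ℝ) < Dm + x := by linarith
    have hq : HasDerivAt (fun x : ℝ => Dm + x) 1 x := (hasDerivAt_id x).const_add Dm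
    have hinner : HasDerivAt (fun x : ℝ => 2 * N / (Dm + x))
        ((0 * (Dm + x) - 2 * N * 1) / (Dm + x) ^ 2) x :=
      (hasDerivAt_const x (2 * N)).div hq hs.ne'
    have hexp1 := (Real.hasDerivAt_exp (2 * N / (Dm + x))).comp x hinner
    have h1 := hq.mul hexp1
    have hinner2 : HasDerivAt (fun x : ℝ => N / x)
        ((0 * x - N * 1) / x ^ 2) x :=
      (hasDerivAt_const x N).div (hasDerivAt_id x) hx0.ne'
    have hexp2 := (Real.hasDerivAt_exp (N / x)).comp x hinner2
    have h2 := (hasDerivAt_id x).mul hexp2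
    have h := (h1.sub (hasDerivAt_const x (Dm * Real.exp (N / Dm)))).sub h2
    convert h using 1
    · rfl
    · rfl
    · rfl
    have hx2 : x ^ 2 ≠ 0 := pow_ne_zero 2 hx0.ne'
    have hs2 : (Dm + x) ^ 2 ≠ 0 := pow_ne_zero 2 hs.ne'
    simp only [Function.comp_apply, id]
    field_simp
    ring
  apply monotoneOn_of_deriv_nonneg (convex_Ioo 0 Dm)
  · apply ContinuousOn.sub
    apply ContinuousOn.sub
    · apply ContinuousOn.mul (by fun_prop)
      apply Real.continuous_exp.comp_continuousOn
      apply ContinuousOn.div continuousOn_const (by fun_prop)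
      intro x hx h
      have : (0:ℝ) < Dm + x := by linarith [hx.1]
      exact this.ne' h
    · exact continuousOn_const
    · apply ContinuousOn.mul continuousOn_id
      apply Real.continuous_exp.comp_continuousOn
      exact ContinuousOn.div continuousOn_const continuousOn_id fun x hx => hx.1.ne'
  · intro x hx
    rw [interior_Ioo] at hx
    exact (hderiv x hx).differentiableAt.differentiableWithinAt
  · intro x hx
    rw [interior_Ioo] at hx
    rw [(hderiv x hx).deriv]
    obtain ⟨hx0, hxD⟩ := hx
    have hs : (0:ℝ) < Dm + x := by linarith
    have hu : 0 < 2 * N / (Dm + x) := by positivity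
    have huv : 2 * N / (Dm + x) ≤ N / x := by
      rw [div_le_div_iff₀ hs hx0]
      nlinarith
    have := aux_antitone (Set.mem_Ici.2 hu.le) (Set.mem_Ici.2 (hu.le.trans huv)) huv
    simp only at this
    linarith
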